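/- Assume c̃₁ = c̃₂ > 0 and ñ₁ ≠ ñ₂ (both positive). With ρ̃_j as above and λ with Re λ ≫ 1, |Im λ| ≤ δ₁ Re λ, the function g(σ) = c̃₁ρ̃₁(σ) − c̃₂ρ̃₂(σ) is nonzero for all σ ≥ 0 and satisfies |g(σ)|^{−1} ≤ C⟨σ/|λ|²⟩^{1/2}, with C independent of σ and λ. -/

import Mathlib

open Complex

/-- Isotropic case: `c̃₁ = c̃₂`, `ñ₁ ≠ ñ₂`. Then `g(σ) = c̃₁ρ̃₁(σ) − c̃₂ρ̃₂(σ)` is nonzero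
for all `σ ≥ 0` and `|g(σ)|⁻¹ ≤ C⟨σ/|λ|²⟩^{1/2}`, with `C` independent of `σ`, `λ`,
for `λ` with `Re λ` large and `|Im λ| ≤ δ₁ Re λ`. -/
theorem stmt9 (d : ℕ) (hd : 2 ≤ d)
    (c1 c2 n1 n2 : ℝ) (hc1 : 0 < c1) (hc2 : 0 < c2) (hn1 : 0 < n1) (hn2 : 0 < n2)
    (hc : c1 = c2) (hn : n1 ≠ n2) :
    ∃ δ₁ > (0 : ℝ), ∃ C₀ > (0 : ℝ), ∃ C > (0 : ℝ),
      ∀ (lam : ℂ) (σ : ℝ) (ρ1 ρ2 : ℂ),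
        C₀ ≤ lam.re → |lam.im| ≤ δ₁ * lam.re → 0 ≤ σ →
        ρ1 ^ 2 = ((σ : ℂ) + (((d : ℂ) - 2) / 2) ^ 2) * lam⁻¹ ^ 2 - (n1 / c1 : ℝ) →
        ρ2 ^ 2 = ((σ : ℂ) + (((d : ℂ) - 2) / 2) ^ 2) * lam⁻¹ ^ 2 - (n2 / c2 : ℝ) →
        0 < ρ1.re → 0 < ρ2.re →
        (c1 : ℂ) * ρ1 - (c2 : ℂ) * ρ2 ≠ 0 ∧
        ‖(c1 : ℂ) * ρ1 - (c2 : ℂ) * ρ2‖⁻¹ ≤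
          C * (1 + (σ / ‖lam‖ ^ 2) ^ 2) ^ ((1 : ℝ) / 4) := by
  set m : ℝ := ((d : ℝ) - 2) / 2 with hm_def
  set K : ℝ := m ^ 2 + n1 / c1 + n2 / c2 + 1 with hK_def
  have hK1 : 1 ≤ K := by
    rw [hK_def]
    have h1 := div_pos hn1 hc1
    have h2 := div_pos hn2 hc2
    nlinarith [sq_nonneg m]
  have hD : (0 : ℝ) < |n1 - n2| := abs_pos.mpr (sub_ne_zero.mpr hn)
  refine ⟨1, one_pos, 1, one_pos, 4 * K / |n1 - n2|, by positivity, ?_⟩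
  intro lam σ ρ1 ρ2 hre him hσ hρ1 hρ2 hre1 hre2
  have hlam1 : 1 ≤ ‖lam‖ :=
    le_trans hre (le_trans (le_abs_self _) (Complex.abs_re_le_norm lam))
  set x : ℝ := σ / ‖lam‖ ^ 2 with hx_def
  have hx0 : 0 ≤ x := by positivity
  set y : ℝ := (1 + x ^ 2) ^ ((1 : ℝ) / 4) with hy_def
  have hy0 : 0 < y := Real.rpow_pos_of_pos (by positivity) _
  have hy4 : y ^ 4 = 1 + x ^ 2 := by
    rw [hy_def, ← Real.rpow_natCast ((1 + x ^ 2) ^ ((1 : ℝ) / 4)) 4,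
      ← Real.rpow_mul (by positivity)]
    norm_num
  clear_value m K x y
  -- bound on each rho
  have key : ∀ (ρ : ℂ) (n c : ℝ), 0 < c → 0 < n → m ^ 2 + n / c + 1 ≤ K →
      ρ ^ 2 = ((σ : ℂ) + (((d : ℂ) - 2) / 2) ^ 2) * lam⁻¹ ^ 2 - (n / c : ℝ) →
      ‖ρ‖ ≤ 2 * K * y := by
    intro ρ n c hc0 hn0 hnc hρ
    have hρ' : ρ ^ 2 = (((σ + m ^ 2 : ℝ)) : ℂ) * (lam⁻¹) ^ 2 - ((n / c : ℝ) : ℂ) := by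
      rw [hρ, hm_def]; push_cast; ring
    have h1 : ‖ρ‖ ^ 2 ≤ (σ + m ^ 2) * ‖lam‖⁻¹ ^ 2 + n / c := by
      rw [← norm_pow, hρ']
      refine le_trans (norm_sub_le _ _) ?_
      rw [norm_mul, norm_pow, norm_inv, Complex.norm_real, Real.norm_eq_abs, Complex.norm_real, Real.norm_eq_abs,
        _root_.abs_of_nonneg (add_nonneg hσ (sq_nonneg m)),
        _root_.abs_of_nonneg (div_pos hn0 hc0).le]
    have hinv : ‖lam‖⁻¹ ^ 2 ≤ 1 := by
      have h0 : (0:ℝ) < ‖lam‖ := lt_of_lt_of_le one_pos hlam1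
      have h01 : ‖lam‖⁻¹ ≤ 1 := by
        rw [inv_le_one_iff₀]; right; exact hlam1
      nlinarith [inv_nonneg.mpr h0.le]
    have hxe : σ * ‖lam‖⁻¹ ^ 2 = x := by
      rw [hx_def]; field_simp
    have hmi : m ^ 2 * ‖lam‖⁻¹ ^ 2 ≤ m ^ 2 :=
      mul_le_of_le_one_right (sq_nonneg m) hinv
    have hdist : (σ + m ^ 2) * ‖lam‖⁻¹ ^ 2
        = σ * ‖lam‖⁻¹ ^ 2 + m ^ 2 * ‖lam‖⁻¹ ^ 2 := by ring
    have h2 : ‖ρ‖ ^ 2 ≤ K * (1 + x) := by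
      have hKx : x ≤ K * x := le_mul_of_one_le_left hx0 hK1
      rw [hdist, hxe] at h1
      linarith [h1, hmi, hnc, hKx]
    have h4 : ‖ρ‖ ^ 4 ≤ (2 * K * y) ^ 4 := by
      have e : (2 * K * y) ^ 4 = 16 * K ^ 4 * (1 + x ^ 2) := by
        rw [mul_pow, mul_pow, hy4]; ring
      have hsq : (‖ρ‖ ^ 2) ^ 2 ≤ (K * (1 + x)) ^ 2 :=
        pow_le_pow_left₀ (sq_nonneg _) h2 2
      have hA : (1 + x) ^ 2 ≤ 2 * (1 + x ^ 2) := by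
        have h := sq_nonneg (1 - x); linarith only [h]
      have hKK : 1 ≤ K ^ 2 := by
        have h := mul_le_mul hK1 hK1 zero_le_one (le_trans zero_le_one hK1)
        calc (1:ℝ) = 1 * 1 := by ring
          _ ≤ K * K := h
          _ = K ^ 2 := by ring
      have hK4 : K ^ 2 ≤ K ^ 4 := by
        have h := mul_le_mul_of_nonneg_left hKK (sq_nonneg K)
        calc K ^ 2 = K ^ 2 * 1 := by ring
          _ ≤ K ^ 2 * K ^ 2 := h
          _ = K ^ 4 := by ring
      have ht0 : (0:ℝ) ≤ 1 + x ^ 2 := by positivity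
      have s1 : K ^ 2 * (1 + x) ^ 2 ≤ K ^ 2 * (2 * (1 + x ^ 2)) :=
        mul_le_mul_of_nonneg_left hA (sq_nonneg K)
      have s2 : K ^ 2 * (1 + x ^ 2) ≤ K ^ 4 * (1 + x ^ 2) :=
        mul_le_mul_of_nonneg_right hK4 ht0
      have s3 : (0:ℝ) ≤ K ^ 4 * (1 + x ^ 2) := by positivity
      have h6 : (K * (1 + x)) ^ 2 ≤ 16 * K ^ 4 * (1 + x ^ 2) := by
        linarith only [s1, s2, s3]
      calc ‖ρ‖ ^ 4 = (‖ρ‖ ^ 2) ^ 2 := by ring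
        _ ≤ (K * (1 + x)) ^ 2 := hsq
        _ ≤ 16 * K ^ 4 * (1 + x ^ 2) := h6
        _ = (2 * K * y) ^ 4 := e.symm
    have h2Ky : 0 ≤ 2 * K * y := by positivity
    exact le_of_pow_le_pow_left₀ (by norm_num) h2Ky h4
  have hcle : ∀ n' c' : ℝ, 0 < n' → 0 < c' →
      (n' = n1 ∧ c' = c1) ∨ (n' = n2 ∧ c' = c2) → m ^ 2 + n' / c' + 1 ≤ K := by
    rintro n' c' hn' hc' (⟨rfl, rfl⟩ | ⟨rfl, rfl⟩) <;> rw [hK_def]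
    · have := div_pos hn2 hc2; linarith
    · have := div_pos hn1 hc1; linarith
  have hb1 : ‖ρ1‖ ≤ 2 * K * y :=
    key ρ1 n1 c1 hc1 hn1 (hcle n1 c1 hn1 hc1 (Or.inl ⟨rfl, rfl⟩)) hρ1
  have hb2 : ‖ρ2‖ ≤ 2 * K * y :=
    key ρ2 n2 c2 hc2 hn2 (hcle n2 c2 hn2 hc2 (Or.inr ⟨rfl, rfl⟩)) hρ2
  have hc2' : (c2 : ℂ) ≠ 0 := Complex.ofReal_ne_zero.mpr hc2.ne'
  have hid : (c1 : ℂ) * ((ρ1 - ρ2) * (ρ1 + ρ2)) = ((n2 - n1 : ℝ) : ℂ) := by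
    have e : (c1 : ℂ) * ((ρ1 - ρ2) * (ρ1 + ρ2)) = (c1 : ℂ) * ρ1 ^ 2 - (c1 : ℂ) * ρ2 ^ 2 := by
      ring
    rw [e, hρ1, hρ2, hc]
    push_cast
    field_simp
    ring
  have hRHS : ((n2 - n1 : ℝ) : ℂ) ≠ 0 :=
    Complex.ofReal_ne_zero.mpr (sub_ne_zero.mpr (Ne.symm hn))
  have hdiff_ne : ρ1 - ρ2 ≠ 0 := by
    intro h
    exact hRHS (by rw [← hid, h]; ring)
  have hsum_ne : ρ1 + ρ2 ≠ 0 := by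
    intro h
    have := congrArg Complex.re h
    simp [Complex.add_re] at this
    linarith
  have ha0 : 0 < ‖ρ1 - ρ2‖ := norm_pos_iff.mpr hdiff_ne
  have hb0 : 0 < ‖ρ1 + ρ2‖ := norm_pos_iff.mpr hsum_ne
  have hab : c1 * (‖ρ1 - ρ2‖ * ‖ρ1 + ρ2‖) = |n2 - n1| := by
    have h := congrArg (‖·‖) hid
    rwa [norm_mul, norm_mul, Complex.norm_real, Real.norm_eq_abs, Complex.norm_real, Real.norm_eq_abs, abs_of_pos hc1] at h
  have hgne : (c1 : ℂ) * ρ1 - (c2 : ℂ) * ρ2 ≠ 0 := by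
    have e : (c1 : ℂ) * ρ1 - (c2 : ℂ) * ρ2 = (c1 : ℂ) * (ρ1 - ρ2) := by rw [hc]; ring
    rw [e]
    exact mul_ne_zero (Complex.ofReal_ne_zero.mpr hc1.ne') hdiff_ne
  refine ⟨hgne, ?_⟩
  have habsg : ‖(c1 : ℂ) * ρ1 - (c2 : ℂ) * ρ2‖
      = c1 * ‖ρ1 - ρ2‖ := by
    rw [show (c1 : ℂ) * ρ1 - (c2 : ℂ) * ρ2 = (c1 : ℂ) * (ρ1 - ρ2) by rw [hc]; ring,
      norm_mul, Complex.norm_real, Real.norm_eq_abs, abs_of_pos hc1]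
  have key2 : (c1 * ‖ρ1 - ρ2‖)⁻¹ = ‖ρ1 + ρ2‖ / |n2 - n1| := by
    rw [← hab]
    field_simp
  rw [habsg, key2]
  have hsum_le : ‖ρ1 + ρ2‖ ≤ 4 * K * y :=
    le_trans (norm_add_le _ _) (by linarith)
  rw [abs_sub_comm n1 n2, div_mul_eq_mul_div]
  gcongr
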